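/- A function f: {0,1}^n → ℝ is self-bounding if there exist f_i: {0,1}^{n−1} → ℝ with 0 ≤ f(x) − f_i(x^{(i)}) ≤ 1 for all i and Σ_{i=1}^n (f(x) − f_i(x^{(i)})) ≤ f(x). The scaled maximum-weight-matching function is self-bounding: fix a weighted graph with a fixed edge set F (always present) and optional edges e_1,...,e_k with weights in [0, W]; for x ∈ {0,1}^k, let f(x) = μ_w(F ∪ {e_i : x_i = 1})/W. Then f is self-bounding, with f_i(x^{(i)}) = μ_w(F ∪ {e_j : x_j = 1, j ≠ i})/W. -/
import Mathlib


open scoped Classical BigOperators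

noncomputable section

variable {V : Type*}

/-- A matching: a set of non-loop edges, pairwise vertex-disjoint. -/
def IsMatching (M : Finset (Sym2 V)) : Prop :=
  (∀ e ∈ M, ¬ e.IsDiag) ∧
    ∀ e ∈ M, ∀ f ∈ M, e ≠ f → ∀ v : V, v ∈ e → v ∉ f

/-- μ(G): maximum cardinality of a matching contained in `G`. -/
def matchNum (G : Finset (Sym2 V)) : ℕ :=
  sSup {k | ∃ M : Finset (Sym2 V), M ⊆ G ∧ IsMatching M ∧ M.card = k}

/-- μ_w(G): maximum weight of a matching contained in `G` (ℕ-valued weights). -/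
def matchWeight (G : Finset (Sym2 V)) (w : Sym2 V → ℕ) : ℕ :=
  sSup {s | ∃ M : Finset (Sym2 V), M ⊆ G ∧ IsMatching M ∧ ∑ e ∈ M, w e = s}

/-- μ_w(G): maximum weight of a matching contained in `G` (ℝ-valued weights). -/
def matchWeightR (G : Finset (Sym2 V)) (w : Sym2 V → ℝ) : ℝ :=
  sSup {s | ∃ M : Finset (Sym2 V), M ⊆ G ∧ IsMatching M ∧ ∑ e ∈ M, w e = s}

/-- Degree of a vertex in an edge set. -/
def deg (H : Finset (Sym2 V)) (v : V) : ℕ := (H.filter fun e => v ∈ e).card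

/-- The edge-degree deg_H(u) + deg_H(v) of an edge e = (u,v). -/
def degSum (H : Finset (Sym2 V)) (e : Sym2 V) : ℕ :=
  deg H e.out.1 + deg H e.out.2

/-- The unfolded copies of a weighted edge e = (u,v):
the edges (u^i, v^{w_e+1-i}) for i ∈ [w_e]. -/
def unfoldEdge (w : Sym2 V → ℕ) (e : Sym2 V) : Finset (Sym2 (V × ℕ)) :=
  (Finset.Icc 1 (w e)).image fun i => s((e.out.1, i), (e.out.2, w e + 1 - i))

/-- The unfolding φ(G) of a weighted graph. -/
def unfoldGraph (G : Finset (Sym2 V)) (w : Sym2 V → ℕ) : Finset (Sym2 (V × ℕ)) :=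
  G.biUnion (unfoldEdge w)

/-- The refolding R(H) ⊆ G of a subgraph H ⊆ φ(G): the weighted edges having
at least one unfolded copy in H. -/
def refold (G : Finset (Sym2 V)) (w : Sym2 V → ℕ)
    (H : Finset (Sym2 (V × ℕ))) : Finset (Sym2 V) :=
  G.filter fun e => ∃ f ∈ unfoldEdge w e, f ∈ H

/-- A bipartite edge set: some side `A` of a bipartition meets every edge exactly once. -/
def IsBipartite (G : Finset (Sym2 V)) : Prop :=
  ∃ A : Set V, ∀ e ∈ G, ∃ u v, e = s(u, v) ∧ u ∈ A ∧ v ∉ A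

lemma IsMatching.subset' {M M' : Finset (Sym2 V)} (h : M' ⊆ M) (hM : IsMatching M) :
    IsMatching M' :=
  ⟨fun e he => hM.1 e (h he), fun e he f hf => hM.2 e (h he) f (h hf)⟩

lemma matchWeightR_spec (G : Finset (Sym2 V)) (w : Sym2 V → ℝ) :
    (∃ M : Finset (Sym2 V), M ⊆ G ∧ IsMatching M ∧ ∑ e ∈ M, w e = matchWeightR G w) ∧
    ∀ M : Finset (Sym2 V), M ⊆ G → IsMatching M → ∑ e ∈ M, w e ≤ matchWeightR G w := by
  set S : Set ℝ := {s | ∃ M : Finset (Sym2 V), M ⊆ G ∧ IsMatching M ∧ ∑ e ∈ M, w e = s}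
    with hS
  have hfin : S.Finite := by
    apply Set.Finite.subset
      (Finset.finite_toSet ((G.powerset).image fun M => ∑ e ∈ M, w e))
    rintro s ⟨M, hM, -, rfl⟩
    simp only [Finset.coe_image, Set.mem_image, Finset.mem_coe, Finset.mem_powerset]
    exact ⟨M, hM, rfl⟩
  have hne : S.Nonempty := ⟨0, ∅, by simp [IsMatching]⟩
  constructor
  · obtain ⟨M, hMG, hM, hsum⟩ := hne.csSup_mem hfin
    exact ⟨M, hMG, hM, hsum⟩
  · intro M hMG hM
    exact le_csSup hfin.bddAbove ⟨M, hMG, hM, rfl⟩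

lemma matchWeightR_mono {G G' : Finset (Sym2 V)} (h : G ⊆ G') (w : Sym2 V → ℝ) :
    matchWeightR G w ≤ matchWeightR G' w := by
  obtain ⟨⟨M, hMG, hM, hsum⟩, -⟩ := matchWeightR_spec G w
  rw [← hsum]
  exact (matchWeightR_spec G' w).2 M (hMG.trans h) hM

/-- the scaled maximum-weight-matching function is self-bounding.
With a fixed edge set `F`, optional edges e_1,…,e_k with weights in (0, W], and
f(x) = μ_w(F ∪ {e_i : x_i = 1})/W, the functions
f_i(x) = μ_w(F ∪ {e_j : x_j = 1, j ≠ i})/W witness that `f` is self-bounding: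
f_i does not depend on coordinate i, 0 ≤ f − f_i ≤ 1, and Σ_i (f − f_i) ≤ f. -/
theorem matching_function_self_bounding
    (k : ℕ) (F : Finset (Sym2 V)) (opt : Fin k → Sym2 V)
    (hinj : Function.Injective opt)
    (hG : ∀ e ∈ F, ¬ e.IsDiag) (hGopt : ∀ i, ¬ (opt i).IsDiag)
    (W : ℝ) (hW : 0 < W) (w : Sym2 V → ℝ)
    (hwF : ∀ e ∈ F, 0 < w e ∧ w e ≤ W) (hwopt : ∀ i, 0 < w (opt i) ∧ w (opt i) ≤ W)
    (f : (Fin k → Bool) → ℝ)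
    (hf : ∀ x, f x =
      matchWeightR (F ∪ (Finset.univ.filter fun i => x i = true).image opt) w / W)
    (g : Fin k → (Fin k → Bool) → ℝ)
    (hg : ∀ i x, g i x =
      matchWeightR
        (F ∪ ((Finset.univ.filter fun j => x j = true).erase i).image opt) w / W) :
    (∀ i x b, g i (Function.update x i b) = g i x) ∧
    (∀ i x, 0 ≤ f x - g i x ∧ f x - g i x ≤ 1) ∧
    (∀ x, ∑ i, (f x - g i x) ≤ f x) := by
  -- notation
  set Gx : (Fin k → Bool) → Finset (Sym2 V) := fun x =>
    F ∪ (Finset.univ.filter fun i => x i = true).image opt with hGx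
  set Gi : Fin k → (Fin k → Bool) → Finset (Sym2 V) := fun i x =>
    F ∪ ((Finset.univ.filter fun j => x j = true).erase i).image opt with hGi
  have hsubGi : ∀ i x, Gi i x ⊆ Gx x := fun i x =>
    Finset.union_subset_union_right (Finset.image_subset_image (Finset.erase_subset _ _))
  -- main estimate: there is a max matching M witnessing all differences
  have main : ∀ x : Fin k → Bool, ∃ M : Finset (Sym2 V), M ⊆ Gx x ∧ IsMatching M ∧
      (∑ e ∈ M, w e = matchWeightR (Gx x) w) ∧
      ∀ i, matchWeightR (Gx x) w - matchWeightR (Gi i x) w ≤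
        if opt i ∈ M then w (opt i) else 0 := by
    intro x
    obtain ⟨⟨M, hMG, hM, hsum⟩, -⟩ := matchWeightR_spec (Gx x) w
    refine ⟨M, hMG, hM, hsum, fun i => ?_⟩
    have herase : M.erase (opt i) ⊆ Gi i x := by
      intro e he
      obtain ⟨hne, heM⟩ := Finset.mem_erase.mp he
      have := hMG heM
      rcases Finset.mem_union.mp this with h1 | h2
      · exact Finset.mem_union_left _ h1
      · obtain ⟨j, hj, rfl⟩ := Finset.mem_image.mp h2
        refine Finset.mem_union_right _ (Finset.mem_image.mpr ⟨j, ?_, rfl⟩)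
        refine Finset.mem_erase.mpr ⟨?_, hj⟩
        rintro rfl; exact hne rfl
    have hB : ∑ e ∈ M.erase (opt i), w e ≤ matchWeightR (Gi i x) w :=
      (matchWeightR_spec (Gi i x) w).2 _ herase (hM.subset' (Finset.erase_subset _ _))
    by_cases hmem : opt i ∈ M
    · rw [Finset.sum_erase_eq_sub hmem] at hB
      simp only [hmem, if_true]
      linarith [hB, hsum]
    · rw [Finset.erase_eq_of_notMem hmem, hsum] at hB
      simp only [hmem, if_false]
      linarith
  -- nonnegativity of weights on the full edge set
  have hwGx : ∀ x, ∀ e ∈ Gx x, 0 ≤ w e ∧ w e ≤ W := by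
    intro x e he
    rcases Finset.mem_union.mp he with h1 | h2
    · exact ⟨(hwF e h1).1.le, (hwF e h1).2⟩
    · obtain ⟨j, -, rfl⟩ := Finset.mem_image.mp h2
      exact ⟨(hwopt j).1.le, (hwopt j).2⟩
  refine ⟨?_, ?_, ?_⟩
  · -- g i does not depend on coordinate i
    intro i x b
    have hset : ((Finset.univ.filter fun j => Function.update x i b j = true).erase i)
        = ((Finset.univ.filter fun j => x j = true).erase i) := by
      ext j
      simp only [Finset.mem_erase, Finset.mem_filter, Finset.mem_univ, true_and]
      constructor
      · rintro ⟨hji, hj⟩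
        rw [Function.update_of_ne hji] at hj
        exact ⟨hji, hj⟩
      · rintro ⟨hji, hj⟩
        exact ⟨hji, by rw [Function.update_of_ne hji]; exact hj⟩
    rw [hg, hg, hset]
  · -- 0 ≤ f - g i ≤ 1
    intro i x
    obtain ⟨M, hMG, hM, hsum, hdiff⟩ := main x
    have hfg : f x - g i x = (matchWeightR (Gx x) w - matchWeightR (Gi i x) w) / W := by
      rw [hf, hg, div_sub_div_same]
    constructor
    · rw [hfg]
      exact div_nonneg (sub_nonneg.mpr (matchWeightR_mono (hsubGi i x) w)) hW.le
    · rw [hfg, div_le_one hW]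
      refine (hdiff i).trans ?_
      by_cases hmem : opt i ∈ M
      · simp only [hmem, if_true]; exact (hwopt i).2
      · simp only [hmem, if_false]; exact hW.le
  · -- sum bound
    intro x
    obtain ⟨M, hMG, hM, hsum, hdiff⟩ := main x
    have hfg : ∀ i, f x - g i x
        = (matchWeightR (Gx x) w - matchWeightR (Gi i x) w) / W := by
      intro i; rw [hf, hg, div_sub_div_same]
    have hnum : ∑ i, (matchWeightR (Gx x) w - matchWeightR (Gi i x) w)
        ≤ matchWeightR (Gx x) w := by
      calc ∑ i, (matchWeightR (Gx x) w - matchWeightR (Gi i x) w)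
          ≤ ∑ i, if opt i ∈ M then w (opt i) else 0 :=
            Finset.sum_le_sum fun i _ => hdiff i
        _ = ∑ i ∈ Finset.univ.filter (fun i => opt i ∈ M), w (opt i) :=
            (Finset.sum_filter _ _).symm
        _ = ∑ e ∈ (Finset.univ.filter (fun i => opt i ∈ M)).image opt, w e :=
            (Finset.sum_image fun a _ b _ h => hinj h).symm
        _ ≤ ∑ e ∈ M, w e := by
            apply Finset.sum_le_sum_of_subset_of_nonneg
            · intro e he
              obtain ⟨j, hj, rfl⟩ := Finset.mem_image.mp he
              exact (Finset.mem_filter.mp hj).2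
            · intro e heM _
              exact (hwGx x e (hMG heM)).1
        _ = matchWeightR (Gx x) w := hsum
    calc ∑ i, (f x - g i x)
        = (∑ i, (matchWeightR (Gx x) w - matchWeightR (Gi i x) w)) / W := by
          rw [Finset.sum_div]; exact Finset.sum_congr rfl fun i _ => hfg i
      _ ≤ matchWeightR (Gx x) w / W := by gcongr
      _ = f x := (hf x).symm
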